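/- If a graph G has a restricted frame representation and v is a vertex of G, then the graph obtained from G by adding a twin of v (a new vertex u, non-adjacent to v, whose neighborhood is exactly N(v)) is also a restricted frame graph. -/

import Mathlib

/-! ## Frames and restricted frame graphs -/

/-- An axis-parallel box in `ℝ²`, i.e. a product `[x1,x2] × [y1,y2]` of two closed
nondegenerate intervals. -/
structure Box : Type where
  x1 : ℝ
  x2 : ℝ
  y1 : ℝ
  y2 : ℝ
  hx : x1 < x2
  hy : y1 < y2

namespace Box

/-- The region bounded by the frame of a box: the closed box itself. -/
def region (B : Box) : Set (ℝ × ℝ) :=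
  {p : ℝ × ℝ | B.x1 ≤ p.1 ∧ p.1 ≤ B.x2 ∧ B.y1 ≤ p.2 ∧ p.2 ≤ B.y2}

/-- The frame of a box: the topological boundary of the closed box. -/
def frame (B : Box) : Set (ℝ × ℝ) :=
  {p : ℝ × ℝ | p ∈ B.region ∧ (p.1 = B.x1 ∨ p.1 = B.x2 ∨ p.2 = B.y1 ∨ p.2 = B.y2)}

/-- The left side `{x1} × [y1,y2]` of a frame. -/
def leftSide (B : Box) : Set (ℝ × ℝ) :=
  {p : ℝ × ℝ | p.1 = B.x1 ∧ B.y1 ≤ p.2 ∧ p.2 ≤ B.y2}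

/-- The right side `{x2} × [y1,y2]` of a frame. -/
def rightSide (B : Box) : Set (ℝ × ℝ) :=
  {p : ℝ × ℝ | p.1 = B.x2 ∧ B.y1 ≤ p.2 ∧ p.2 ≤ B.y2}

/-- The top side `[x1,x2] × {y2}` of a frame. -/
def topSide (B : Box) : Set (ℝ × ℝ) :=
  {p : ℝ × ℝ | p.2 = B.y2 ∧ B.x1 ≤ p.1 ∧ p.1 ≤ B.x2}

/-- The bottom side `[x1,x2] × {y1}` of a frame. -/
def bottomSide (B : Box) : Set (ℝ × ℝ) :=
  {p : ℝ × ℝ | p.2 = B.y1 ∧ B.x1 ≤ p.1 ∧ p.1 ≤ B.x2}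

/-- The four corners of a frame. -/
def corners (B : Box) : Set (ℝ × ℝ) :=
  {(B.x1, B.y1), (B.x1, B.y2), (B.x2, B.y1), (B.x2, B.y2)}

/-- `Box.Inside inner outer` : the frame of `outer` contains the frame of `inner`,
i.e. the two frames are disjoint and the frame of `inner` is contained in the region
bounded by the frame of `outer`. -/
def Inside (inner outer : Box) : Prop :=
  inner.frame ∩ outer.frame = ∅ ∧ inner.frame ⊆ outer.region

/-- `Box.Outside B outer` : the frames are disjoint and `B` is not inside `outer`. -/
def Outside (B outer : Box) : Prop :=
  B.frame ∩ outer.frame = ∅ ∧ ¬ Inside B outer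

end Box

/-- A family of frames `(F v)` is a representation of the graph `G` as a restricted
frame graph: distinct vertices are adjacent iff their frames intersect, and the four
restrictions on the representation hold. -/
structure IsFrameRepresentation {V : Type} (G : SimpleGraph V) (F : V → Box) : Prop where
  /-- Distinct vertices are adjacent iff their frames intersect. -/
  adj_iff : ∀ u v : V, u ≠ v → (G.Adj u v ↔ ((F u).frame ∩ (F v).frame).Nonempty)
  /-- (1) Corners of a frame do not coincide with any point of another frame. -/
  corner_free : ∀ u v : V, u ≠ v → (F u).corners ∩ (F v).frame = ∅
  /-- (2) The left side of a frame does not intersect any other frame. -/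
  left_free : ∀ u v : V, u ≠ v → (F u).leftSide ∩ (F v).frame = ∅
  /-- (3) If the right side of a frame intersects a second frame, this right side
  intersects both the top and the bottom side of that second frame. -/
  right_cross : ∀ u v : V, u ≠ v →
    ((F u).rightSide ∩ (F v).frame).Nonempty →
    ((F u).rightSide ∩ (F v).topSide).Nonempty ∧
      ((F u).rightSide ∩ (F v).bottomSide).Nonempty
  /-- (4) If two frames intersect, no third frame is entirely contained in the
  intersection of the regions bounded by the two frames. -/
  not_nested : ∀ u v w : V, u ≠ v → w ≠ u → w ≠ v →
    ((F u).frame ∩ (F v).frame).Nonempty →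
    ¬ ((F w).frame ⊆ (F u).region ∩ (F v).region)

/-- A graph is a restricted frame graph if it admits a frame representation. -/
def IsRestrictedFrameGraph {V : Type} (G : SimpleGraph V) : Prop :=
  ∃ F : V → Box, IsFrameRepresentation G F

/-! ## Basic graph notions -/

/-- The closed neighborhood `N[u] = {u} ∪ N(u)`. -/
def closedNbhd {V : Type} (G : SimpleGraph V) (u : V) : Set V :=
  insert u (G.neighborSet u)

/-- `G` has a full star-cutset: for some vertex `u` the removal of `N[u]`
disconnects `G`. -/
def HasFullStarCutset {V : Type} (G : SimpleGraph V) : Prop :=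
  ∃ u : V, ¬ (G.induce ((closedNbhd G u)ᶜ)).Preconnected

/-- `v` is a cut-vertex of `G`: its removal disconnects `G`. -/
def IsCutVertex {V : Type} (G : SimpleGraph V) (v : V) : Prop :=
  ¬ (G.induce {u : V | u ≠ v}).Preconnected

/-- `G` is a path graph: its vertices can be enumerated `0, …, n-1` so that two
vertices are adjacent iff they are consecutive. -/
def IsPathGraph {V : Type} (G : SimpleGraph V) : Prop :=
  ∃ (n : ℕ) (e : V ≃ Fin n), ∀ u v : V,
    G.Adj u v ↔ ((e u : ℕ) + 1 = (e v : ℕ) ∨ (e v : ℕ) + 1 = (e u : ℕ))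

/-- `G` is a cycle graph (on at least 3 vertices). -/
def IsCycleGraphOn {V : Type} (G : SimpleGraph V) : Prop :=
  ∃ n : ℕ, 3 ≤ n ∧ ∃ e : V ≃ Fin n, ∀ u v : V,
    G.Adj u v ↔ (((e u : ℕ) + 1) % n = (e v : ℕ) ∨ ((e v : ℕ) + 1) % n = (e u : ℕ))

/-- `x` is a leaf of `T`: it has exactly one neighbor. -/
def IsLeaf {V : Type} (T : SimpleGraph V) (x : V) : Prop :=
  (T.neighborSet x).ncard = 1

/-- `G` is a chandelier with pivot `v`: `G - v` is a tree `T` and `v` is adjacent to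
exactly the leaves of `T`. -/
def IsChandelierWithPivot {V : Type} (G : SimpleGraph V) (v : V) : Prop :=
  (G.induce {u : V | u ≠ v}).IsTree ∧
    ∀ u : ↥{u : V | u ≠ v}, (G.Adj v u.val ↔ IsLeaf (G.induce {u : V | u ≠ v}) u)

/-- `G` is a chandelier. -/
def IsChandelier {V : Type} (G : SimpleGraph V) : Prop :=
  ∃ v : V, IsChandelierWithPivot G v

/-- `G` is a luxury chandelier: a chandelier (with pivot `v` and tree `T = G - v`)
such that the neighbor in `T` of each leaf of `T` has degree 2 in `T`. -/
def IsLuxuryChandelier {V : Type} (G : SimpleGraph V) : Prop :=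
  ∃ v : V, IsChandelierWithPivot G v ∧
    ∀ x y : ↥{u : V | u ≠ v}, (G.induce {u : V | u ≠ v}).Adj x y →
      IsLeaf (G.induce {u : V | u ≠ v}) x →
      ((G.induce {u : V | u ≠ v}).neighborSet y).ncard = 2

/-! ## Multigraphs and subdivisions -/

/-- A loopless multigraph on vertex set `V`: a symmetric multiplicity function. -/
structure Multigraph (V : Type) where
  m : V → V → ℕ
  symm : ∀ u v : V, m u v = m v u
  loopless : ∀ v : V, m v v = 0

/-- The multigraph associated with a simple graph (each edge has multiplicity 1). -/
noncomputable def SimpleGraph.toMultigraph {V : Type} (G : SimpleGraph V) : Multigraph V where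
  m u v := @ite ℕ (G.Adj u v) (Classical.dec _) 1 0
  symm u v := by
    beta_reduce
    by_cases h : G.Adj u v
    · rw [if_pos h, if_pos (G.adj_symm h)]
    · rw [if_neg h, if_neg (fun h' => h (G.adj_symm h'))]
  loopless v := by
    beta_reduce
    rw [if_neg (G.irrefl (v := v))]

/-- The interior (set of internal vertices) of a walk. -/
def walkInterior {V : Type} {G : SimpleGraph V} {a b : V} (p : G.Walk a b) : Set V :=
  {w : V | w ∈ p.support ∧ w ≠ a ∧ w ≠ b}

/-- A witness that the simple graph `H` is a `≥k`-subdivision of the multigraph `G`: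
each edge of `G` (counted with multiplicity) is replaced by a path with at least
`k+1` edges between (the images of) its endpoints, these paths being internally
disjoint from each other and from the branch vertices, and covering all of `H`. -/
structure MultiSubdivision {V W : Type} (G : Multigraph V) (H : SimpleGraph W) (k : ℕ) where
  /-- the embedding of branch vertices -/
  f : V ↪ W
  /-- the path replacing the `i`-th parallel edge between `u` and `v` -/
  path : ∀ u v : V, Fin (G.m u v) → H.Walk (f u) (f v)
  path_symm : ∀ (u v : V) (i : Fin (G.m u v)),
    path v u (Fin.cast (G.symm u v) i) = (path u v i).reverse
  path_ne : ∀ (u v : V) (i i' : Fin (G.m u v)), (i : ℕ) ≠ (i' : ℕ) →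
    path u v i ≠ path u v i'
  isPath : ∀ (u v : V) (i : Fin (G.m u v)), (path u v i).IsPath
  length_le : ∀ (u v : V) (i : Fin (G.m u v)), k + 1 ≤ (path u v i).length
  /-- the paths are internally disjoint from the branch vertices -/
  interior_avoid : ∀ (u v : V) (i : Fin (G.m u v)) (x : V),
    f x ∉ walkInterior (path u v i)
  /-- distinct paths are pairwise internally disjoint -/
  interior_disjoint : ∀ (u v : V) (i : Fin (G.m u v)) (u' v' : V) (i' : Fin (G.m u' v')),
    (walkInterior (path u v i) ∩ walkInterior (path u' v' i')).Nonempty →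
    (u = u' ∧ v = v' ∧ (i : ℕ) = (i' : ℕ)) ∨ (u = v' ∧ v = u' ∧ (i : ℕ) = (i' : ℕ))
  /-- every vertex of `H` is a branch vertex or an internal vertex of a path -/
  vertex_cover : ∀ w : W, (∃ x : V, f x = w) ∨
    ∃ (u v : V) (i : Fin (G.m u v)), w ∈ walkInterior (path u v i)
  /-- every edge of `H` lies on one of the paths -/
  edge_cover : ∀ e ∈ H.edgeSet, ∃ (u v : V) (i : Fin (G.m u v)), e ∈ (path u v i).edges

/-- `H` is a `≥k`-subdivision of the multigraph `G`. -/
def IsSubdivisionGE {V W : Type} (G : Multigraph V) (k : ℕ) (H : SimpleGraph W) : Prop :=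
  Nonempty (MultiSubdivision G H k)

/-- `H` is a subdivision of the simple graph `G` (every edge is replaced by a path
with at least one edge). -/
def IsSubdivision {V W : Type} (G : SimpleGraph V) (H : SimpleGraph W) : Prop :=
  IsSubdivisionGE G.toMultigraph 0 H

namespace Multigraph

/-- The underlying simple graph of a multigraph. -/
def support {V : Type} (G : Multigraph V) : SimpleGraph V where
  Adj u v := 0 < G.m u v
  symm := by
    constructor
    intro u v h
    show 0 < G.m v u
    rw [G.symm v u]
    exact h
  loopless := by
    constructor
    intro v h
    have h' : 0 < G.m v v := h
    rw [G.loopless v] at h'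
    exact Nat.lt_irrefl 0 h'

/-- A multigraph is connected if its underlying simple graph is. -/
def Connected {V : Type} (G : Multigraph V) : Prop :=
  G.support.Connected

/-- A multigraph is 2-connected if it is connected, has at least two vertices, and
deleting any single vertex leaves it connected. -/
def TwoConnected {V : Type} (G : Multigraph V) : Prop :=
  G.support.Connected ∧ (∃ u v : V, u ≠ v) ∧
    ∀ v : V, (G.support.induce {u : V | u ≠ v}).Connected

/-- `v` is a feedback vertex of the multigraph `G`: `G - v` contains no cycle
(where a pair of parallel edges forms a cycle of length 2). -/
def IsFeedbackVertex {V : Type} (G : Multigraph V) (v : V) : Prop :=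
  (G.support.induce {u : V | u ≠ v}).IsAcyclic ∧
    ∀ u w : V, u ≠ v → w ≠ v → G.m u w ≤ 1

end Multigraph

/-! ## Induced cycles and big vertices -/

/-- `C` induces a cycle in `G`. -/
def IsInducedCycle {V : Type} (G : SimpleGraph V) (C : Set V) : Prop :=
  IsCycleGraphOn (G.induce C)

/-- `v` is a big vertex of the (induced cycle on) `C` with respect to the frame
representation `F`: `v ∈ C` and `F v` contains the frame of every vertex of `C`
outside `N[v]`. -/
def IsBigVertexOf {V : Type} (G : SimpleGraph V) (F : V → Box) (C : Set V) (v : V) : Prop :=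
  v ∈ C ∧ ∀ u ∈ C, u ≠ v → ¬ G.Adj v u → Box.Inside (F u) (F v)

/-- `v` is a big vertex of the representation `F`: it is a big vertex of some
induced cycle of `G`. -/
def IsBigVertex {V : Type} (G : SimpleGraph V) (F : V → Box) (v : V) : Prop :=
  ∃ C : Set V, IsInducedCycle G C ∧ IsBigVertexOf G F C v

/-! ## Gluing a chandelier onto a vertex -/

/-- The graph obtained from the disjoint union of `G₁` and `G₂` by identifying the
vertex `v` of `G₁` with the vertex `p` of `G₂`. -/
def glueAt {V₁ V₂ : Type} (G₁ : SimpleGraph V₁) (G₂ : SimpleGraph V₂) (v : V₁) (p : V₂) :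
    SimpleGraph (V₁ ⊕ {x : V₂ // x ≠ p}) :=
  SimpleGraph.fromRel (fun a b =>
    match a, b with
    | Sum.inl u, Sum.inl w => G₁.Adj u w
    | Sum.inr u, Sum.inr w => G₂.Adj u.val w.val
    | Sum.inl u, Sum.inr w => u = v ∧ G₂.Adj p w.val
    | Sum.inr _, Sum.inl _ => False)

/-! ## The multigraphs `Ĥ₁` and `Ĥ₂` -/

/-- The multiplicity matrix of `Ĥ₁` (vertices `a₁ = 0`, `b₁ = 1`, `v₁ = 2`, `v₂ = 3`,
`a₂ = 4`, `b₂ = 5`). -/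
def H1hatMatrix : Matrix (Fin 6) (Fin 6) ℕ :=
  !![0, 2, 1, 0, 0, 0;
     2, 0, 1, 0, 0, 0;
     1, 1, 0, 1, 0, 0;
     0, 0, 1, 0, 1, 1;
     0, 0, 0, 1, 0, 2;
     0, 0, 0, 1, 2, 0]

/-- The multigraph `Ĥ₁`: two disjoint digons `a₁b₁`, `a₂b₂`, and single edges
`a₁v₁`, `b₁v₁`, `v₁v₂`, `a₂v₂`, `b₂v₂`. -/
def H1hat : Multigraph (Fin 6) where
  m u v := H1hatMatrix u v
  symm := by
    intro u v
    fin_cases u <;> fin_cases v <;> first | rfl | simp [H1hatMatrix, H2hatMatrix]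
  loopless := by
    intro v
    fin_cases v <;> first | rfl | simp [H1hatMatrix, H2hatMatrix]

/-- The multiplicity matrix of `Ĥ₂` (vertices `a₁ = 0`, `b₁ = 1`, `v = 2`,
`a₂ = 3`, `b₂ = 4`). -/
def H2hatMatrix : Matrix (Fin 5) (Fin 5) ℕ :=
  !![0, 2, 1, 0, 0;
     2, 0, 1, 0, 0;
     1, 1, 0, 1, 1;
     0, 0, 1, 0, 2;
     0, 0, 1, 2, 0]

/-- The multigraph `Ĥ₂`: two digons `a₁b₁`, `a₂b₂`, and single edges
`a₁v`, `b₁v`, `a₂v`, `b₂v`. -/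
def H2hat : Multigraph (Fin 5) where
  m u v := H2hatMatrix u v
  symm := by
    intro u v
    fin_cases u <;> fin_cases v <;> first | rfl | simp [H1hatMatrix, H2hatMatrix]
  loopless := by
    intro v
    fin_cases v <;> first | rfl | simp [H1hatMatrix, H2hatMatrix]

/-! ## Subdivisions of `K₄` and their type -/

/-- The complete graph on four vertices. -/
def K4 : SimpleGraph (Fin 4) := ⊤

/-- The set of edges of `K₄` that are subdivided at least once in the subdivision
witnessed by `S` (i.e. replaced by a path with at least two edges). -/
def subdividedEdges {W : Type} {H : SimpleGraph W}
    (S : MultiSubdivision K4.toMultigraph H 0) : Set (Sym2 (Fin 4)) :=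
  {e : Sym2 (Fin 4) | ∃ (u v : Fin 4) (i : Fin (K4.toMultigraph.m u v)),
    e = s(u, v) ∧ 2 ≤ (S.path u v i).length}

/-! ## Adding a twin -/

/-- The graph obtained from `G` by adding a twin of `v`: a new vertex, non-adjacent
to `v`, whose neighborhood is exactly `N(v)`. -/
def addTwin {V : Type} (G : SimpleGraph V) (v : V) : SimpleGraph (V ⊕ Unit) :=
  SimpleGraph.fromRel (fun a b =>
    match a, b with
    | Sum.inl u, Sum.inl w => G.Adj u w
    | Sum.inr _, Sum.inl u => G.Adj v u
    | _, _ => False)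

/-! ## The construction of Burling and Pawlik et al. -/

/-- A graph-stable set pair: a graph together with a collection of sets of vertices
(intended: stable sets). -/
structure GSPair : Type 1 where
  V : Type
  G : SimpleGraph V
  S : Set (Set V)

namespace GSPair

/-- The vertex type of `next P`: the original vertices, the vertices `(s, u)` of the
copy `H_s` of the graph for each `s ∈ 𝒮`, and the new vertices `v_{s,t}`. -/
abbrev nextVertex (P : GSPair) : Type :=
  P.V ⊕ ((↥P.S × P.V) ⊕ (↥P.S × ↥P.S))

/-- The adjacency generator for the graph of `next P`. -/
def nextRel (P : GSPair) : P.nextVertex → P.nextVertex → Prop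
  | Sum.inl u, Sum.inl v => P.G.Adj u v
  | Sum.inr (Sum.inl (s, u)), Sum.inr (Sum.inl (t, v)) => s = t ∧ P.G.Adj u v
  | Sum.inr (Sum.inr (s, t)), Sum.inr (Sum.inl (s', v)) => s = s' ∧ v ∈ (t : Set P.V)
  | _, _ => False

/-- The procedure `next`: add a disjoint copy `H_s` of the graph for each `s ∈ 𝒮`, a
vertex `v_{s,t}` whose neighborhood is exactly the copy of `t` inside `H_s` for all
`s, t ∈ 𝒮`, and take as new collection of stable sets all `s ∪ t_s` and
`s ∪ {v_{s,t}}`. -/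
def next (P : GSPair) : GSPair where
  V := P.nextVertex
  G := SimpleGraph.fromRel P.nextRel
  S := {A : Set P.nextVertex | ∃ s t : ↥P.S,
    A = (Sum.inl '' (s : Set P.V) : Set P.nextVertex) ∪
        ((fun u : P.V => (Sum.inr (Sum.inl (s, u)) : P.nextVertex)) '' (t : Set P.V)) ∨
    A = (Sum.inl '' (s : Set P.V) : Set P.nextVertex) ∪ {Sum.inr (Sum.inr (s, t))}}

/-- The starting pair: a single vertex, with the single stable set consisting of
that vertex. -/
def base : GSPair := ⟨PUnit, ⊥, {Set.univ}⟩

/-- `P` is an induced subgraph-stable set pair of `Q`. -/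
def IsInducedSubpair (P Q : GSPair) : Prop :=
  ∃ f : P.V ↪ Q.V, (∀ u v : P.V, P.G.Adj u v ↔ Q.G.Adj (f u) (f v)) ∧
    ∀ A ∈ P.S, ∃ B ∈ Q.S, A = f ⁻¹' B

/-- A graph-stable set pair is constructible if it is an induced subgraph-stable set
pair of some iterate of `next` on the starting pair. -/
def Constructible (P : GSPair) : Prop :=
  ∃ i : ℕ, IsInducedSubpair P (next^[i] base)

end GSPair


/-! ## Auxiliary lemmas for adding a twin -/

namespace TwinAux

open Box

lemma frame_def (B : Box) (p : ℝ × ℝ) :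
    p ∈ B.frame ↔ (B.x1 ≤ p.1 ∧ p.1 ≤ B.x2 ∧ B.y1 ≤ p.2 ∧ p.2 ≤ B.y2) ∧
      (p.1 = B.x1 ∨ p.1 = B.x2 ∨ p.2 = B.y1 ∨ p.2 = B.y2) := Iff.rfl

lemma region_def (B : Box) (p : ℝ × ℝ) :
    p ∈ B.region ↔ (B.x1 ≤ p.1 ∧ p.1 ≤ B.x2 ∧ B.y1 ≤ p.2 ∧ p.2 ≤ B.y2) := Iff.rfl

lemma left_def (B : Box) (p : ℝ × ℝ) :
    p ∈ B.leftSide ↔ (p.1 = B.x1 ∧ B.y1 ≤ p.2 ∧ p.2 ≤ B.y2) := Iff.rfl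

lemma right_def (B : Box) (p : ℝ × ℝ) :
    p ∈ B.rightSide ↔ (p.1 = B.x2 ∧ B.y1 ≤ p.2 ∧ p.2 ≤ B.y2) := Iff.rfl

lemma top_def (B : Box) (p : ℝ × ℝ) :
    p ∈ B.topSide ↔ (p.2 = B.y2 ∧ B.x1 ≤ p.1 ∧ p.1 ≤ B.x2) := Iff.rfl

lemma bot_def (B : Box) (p : ℝ × ℝ) :
    p ∈ B.bottomSide ↔ (p.2 = B.y1 ∧ B.x1 ≤ p.1 ∧ p.1 ≤ B.x2) := Iff.rfl

lemma corners_def (B : Box) (p : ℝ × ℝ) :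
    p ∈ B.corners ↔ p = (B.x1, B.y1) ∨ p = (B.x1, B.y2) ∨ p = (B.x2, B.y1) ∨
      p = (B.x2, B.y2) := by
  simp [Box.corners]

lemma right_subset_frame (B : Box) : B.rightSide ⊆ B.frame := by
  intro p hp
  rw [right_def] at hp
  exact ⟨⟨hp.1 ▸ B.hx.le, hp.1.le, hp.2.1, hp.2.2⟩, Or.inr (Or.inl hp.1)⟩

lemma left_subset_frame (B : Box) : B.leftSide ⊆ B.frame := by
  intro p hp
  rw [left_def] at hp
  exact ⟨⟨hp.1.ge, hp.1 ▸ B.hx.le, hp.2.1, hp.2.2⟩, Or.inl hp.1⟩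

lemma top_subset_frame (B : Box) : B.topSide ⊆ B.frame := by
  intro p hp
  rw [top_def] at hp
  exact ⟨⟨hp.2.1, hp.2.2, hp.1 ▸ B.hy.le, hp.1.le⟩, Or.inr (Or.inr (Or.inr hp.1))⟩

lemma bot_subset_frame (B : Box) : B.bottomSide ⊆ B.frame := by
  intro p hp
  rw [bot_def] at hp
  exact ⟨⟨hp.2.1, hp.2.2, hp.1.ge, hp.1 ▸ B.hy.le⟩, Or.inr (Or.inr (Or.inl hp.1))⟩

/-- `A`'s right side crosses vertically through `C`. -/
def Cross (A C : Box) : Prop :=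
  C.x1 < A.x2 ∧ A.x2 < C.x2 ∧ A.y1 < C.y1 ∧ C.y2 < A.y2

lemma cross_top_bot {A C : Box} (h : Cross A C) :
    (A.rightSide ∩ C.topSide).Nonempty ∧ (A.rightSide ∩ C.bottomSide).Nonempty := by
  obtain ⟨h1, h2, h3, h4⟩ := h
  constructor
  · exact ⟨(A.x2, C.y2), ⟨rfl, by simp; linarith [C.hy], h4.le⟩, ⟨rfl, h1.le, h2.le⟩⟩
  · exact ⟨(A.x2, C.y1), ⟨rfl, h3.le, by simp; linarith [C.hy]⟩, ⟨rfl, h1.le, h2.le⟩⟩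

lemma cross_inter {A C : Box} (h : Cross A C) : (A.frame ∩ C.frame).Nonempty := by
  obtain ⟨p, hp1, hp2⟩ := (cross_top_bot h).1
  exact ⟨p, right_subset_frame A hp1, top_subset_frame C hp2⟩

lemma cross_asymm {A C : Box} (h : Cross A C) (h' : Cross C A) : False := by
  obtain ⟨_, _, h3, _⟩ := h
  obtain ⟨_, _, h3', _⟩ := h'
  linarith

section Rep

variable {V : Type} {G : SimpleGraph V} {F : V → Box} (hF : IsFrameRepresentation G F)

lemma not_mem_empty_inter {α : Type*} {s t : Set α} (h : s ∩ t = ∅) {p : α}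
    (hs : p ∈ s) (ht : p ∈ t) : False := by
  rw [Set.eq_empty_iff_forall_notMem] at h
  exact h p ⟨hs, ht⟩

include hF

/-- Two horizontal sides cannot overlap. -/
lemma horiz_no {u w : V} (hne : u ≠ w) {p : ℝ × ℝ}
    (hpu : p ∈ (F u).frame) (hpw : p ∈ (F w).frame)
    (h1 : p.2 = (F u).y1 ∨ p.2 = (F u).y2) (h2 : p.2 = (F w).y1 ∨ p.2 = (F w).y2) :
    False := by
  rw [frame_def] at hpu hpw
  obtain ⟨⟨a1, a2, a3, a4⟩, _⟩ := hpu
  obtain ⟨⟨b1, b2, b3, b4⟩, _⟩ := hpw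
  by_cases hx : (F u).x1 ≤ (F w).x1
  · refine not_mem_empty_inter (hF.corner_free w u hne.symm) (p := ((F w).x1, p.2)) ?_ ?_
    · rw [corners_def]
      rcases h2 with h2 | h2
      · exact Or.inl (by rw [h2])
      · exact Or.inr (Or.inl (by rw [h2]))
    · exact ⟨⟨hx, le_trans b1 a2, a3, a4⟩, Or.inr (Or.inr h1)⟩
  · push_neg at hx
    refine not_mem_empty_inter (hF.corner_free u w hne) (p := ((F u).x1, p.2)) ?_ ?_
    · rw [corners_def]
      rcases h1 with h1 | h1
      · exact Or.inl (by rw [h1])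
      · exact Or.inr (Or.inl (by rw [h1]))
    · exact ⟨⟨hx.le, le_trans a1 b2, b3, b4⟩, Or.inr (Or.inr h2)⟩

lemma crossOfRight {u w : V} (hne : u ≠ w)
    (h : ((F u).rightSide ∩ (F w).frame).Nonempty) : Cross (F u) (F w) := by
  obtain ⟨⟨⟨tx, ty⟩, htr, htt⟩, ⟨⟨bx, by'⟩, hbr, hbb⟩⟩ := hF.right_cross u w hne h
  rw [right_def] at htr hbr
  rw [top_def] at htt
  rw [bot_def] at hbb
  obtain ⟨ht1, ht2, ht3⟩ := htr
  obtain ⟨ht4, ht5, ht6⟩ := htt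
  obtain ⟨hb1, hb2, hb3⟩ := hbr
  obtain ⟨hb4, hb5, hb6⟩ := hbb
  simp only at ht1 ht2 ht3 ht4 ht5 ht6 hb1 hb2 hb3 hb4 hb5 hb6
  subst ht1 ht4 hb1 hb4
  have hcu : ∀ q ∈ (F u).corners, q ∈ (F w).frame → False :=
    fun q hq hq' => not_mem_empty_inter (hF.corner_free u w hne) hq hq'
  have hcw : ∀ q ∈ (F w).corners, q ∈ (F u).frame → False :=
    fun q hq hq' => not_mem_empty_inter (hF.corner_free w u hne.symm) hq hq'
  refine ⟨?_, ?_, ?_, ?_⟩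
  · rcases lt_or_eq_of_le ht5 with h' | h'
    · exact h'
    · exact absurd (hcw ((F u).x2, (F w).y2)
        (by rw [corners_def]; right; left; rw [← h'])
        (right_subset_frame _ ⟨rfl, ht2, ht3⟩)) id
  · rcases lt_or_eq_of_le ht6 with h' | h'
    · exact h'
    · exact absurd (hcw ((F u).x2, (F w).y2)
        (by rw [corners_def]; right; right; right; rw [h'])
        (right_subset_frame _ ⟨rfl, ht2, ht3⟩)) id
  · rcases lt_or_eq_of_le hb2 with h' | h'
    · exact h'
    · exact absurd (hcu ((F u).x2, (F w).y1)
        (by rw [corners_def]; right; right; left; rw [h'])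
        (bot_subset_frame _ ⟨rfl, hb5, hb6⟩)) id
  · rcases lt_or_eq_of_le ht3 with h' | h'
    · exact h'
    · exact absurd (hcu ((F u).x2, (F w).y2)
        (by rw [corners_def]; right; right; right; rw [← h'])
        (top_subset_frame _ ⟨rfl, ht5, ht6⟩)) id

/-- Classification of frame intersections. -/
lemma classify {u w : V} (hne : u ≠ w)
    (h : ((F u).frame ∩ (F w).frame).Nonempty) :
    Cross (F u) (F w) ∨ Cross (F w) (F u) := by
  obtain ⟨p, hpu, hpw⟩ := h
  have hpu' := hpu
  have hpw' := hpw
  rw [frame_def] at hpu' hpw'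
  obtain ⟨⟨a1, a2, a3, a4⟩, du⟩ := hpu'
  obtain ⟨⟨b1, b2, b3, b4⟩, dw⟩ := hpw'
  rcases du with d | d | d | d
  · exact absurd (not_mem_empty_inter (hF.left_free u w hne) ⟨d, a3, a4⟩ hpw) id
  · exact Or.inl (crossOfRight hF hne ⟨p, ⟨d, a3, a4⟩, hpw⟩)
  all_goals {
    rcases dw with e | e | e | e
    · exact absurd (not_mem_empty_inter (hF.left_free w u hne.symm) ⟨e, b3, b4⟩ hpu) id
    · exact Or.inr (crossOfRight hF hne.symm ⟨p, ⟨e, b3, b4⟩, hpu⟩)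
    · exact absurd (horiz_no hF hne hpu hpw (by tauto) (Or.inl e)) id
    · exact absurd (horiz_no hF hne hpu hpw (by tauto) (Or.inr e)) id }

/-- A frame meeting another frame is not contained in its region. -/
lemma not_sub_of_inter {u w : V} (hne : u ≠ w)
    (h : ((F u).frame ∩ (F w).frame).Nonempty) :
    ¬ (F u).frame ⊆ (F w).region := by
  intro hsub
  rcases classify hF hne h with hc | hc
  · have : ((F u).x1, (F u).y2) ∈ (F u).frame :=
      ⟨⟨le_rfl, (F u).hx.le, (F u).hy.le, le_rfl⟩, Or.inl rfl⟩
    have := hsub this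
    rw [region_def] at this
    obtain ⟨_, _, _, h4⟩ := this
    simp at h4
    linarith [hc.2.2.2]
  · have : ((F u).x2, (F u).y1) ∈ (F u).frame :=
      ⟨⟨(F u).hx.le, le_rfl, le_rfl, (F u).hy.le⟩, Or.inr (Or.inl rfl)⟩
    have := hsub this
    rw [region_def] at this
    obtain ⟨_, h2, _, _⟩ := this
    simp at h2
    linarith [hc.2.1]

end Rep

end TwinAux

open TwinAux

/-- If a graph `G` has a restricted frame representation and `v`
is a vertex of `G`, then the graph obtained from `G` by adding a twin of `v` is
also a restricted frame graph. -/
theorem addTwin_isRestrictedFrameGraph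
    {V : Type} [Fintype V] (G : SimpleGraph V) (v : V)
    (h : IsRestrictedFrameGraph G) :
    IsRestrictedFrameGraph (addTwin G v) := by
  classical
  obtain ⟨F, hF⟩ := h
  -- the set of all coordinates of the representation
  set S : Finset ℝ :=
    Finset.univ.biUnion (fun u : V => {(F u).x1, (F u).x2, (F u).y1, (F u).y2}) with hS
  have hmemS : ∀ u : V, (F u).x1 ∈ S ∧ (F u).x2 ∈ S ∧ (F u).y1 ∈ S ∧ (F u).y2 ∈ S := by
    intro u
    refine ⟨?_, ?_, ?_, ?_⟩ <;>
      · rw [hS, Finset.mem_biUnion]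
        exact ⟨u, Finset.mem_univ u, by simp⟩
  -- the set of positive differences of coordinates
  set D : Finset ℝ :=
    ((S ×ˢ S).filter (fun p => p.1 < p.2)).image (fun p => p.2 - p.1) with hD
  have hDne : D.Nonempty := by
    refine ⟨(F v).x2 - (F v).x1, ?_⟩
    rw [hD, Finset.mem_image]
    exact ⟨((F v).x1, (F v).x2), by
      rw [Finset.mem_filter]
      exact ⟨Finset.mem_product.2 ⟨(hmemS v).1, (hmemS v).2.1⟩, (F v).hx⟩, rfl⟩
  set gap : ℝ := D.min' hDne with hgap
  have hgap_pos : 0 < gap := by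
    have h1 : gap ∈ D := D.min'_mem hDne
    rw [hD, Finset.mem_image] at h1
    obtain ⟨p, hp, hp2⟩ := h1
    rw [Finset.mem_filter] at hp
    rw [← hp2]
    linarith [hp.2]
  have hgap_le : ∀ a ∈ S, ∀ b ∈ S, a < b → gap ≤ b - a := by
    intro a ha b hb hab
    refine D.min'_le _ ?_
    rw [hD, Finset.mem_image]
    exact ⟨(a, b), Finset.mem_filter.2 ⟨Finset.mem_product.2 ⟨ha, hb⟩, hab⟩, rfl⟩
  set ε : ℝ := gap / 3 with hε
  have hε_pos : 0 < ε := by rw [hε]; linarith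
  have hε_gap : ε < gap := by rw [hε]; linarith
  -- basic arithmetic facts about ε
  have G1 : ∀ a ∈ S, ∀ b ∈ S, a < b → a + ε < b := by
    intro a ha b hb hab
    have := hgap_le a ha b hb hab
    linarith
  have G2 : ∀ a ∈ S, ∀ b ∈ S, a ≤ b + ε → a ≤ b := by
    intro a ha b hb hab
    by_contra hc
    push_neg at hc
    have := hgap_le b hb a ha hc
    linarith
  have Gne : ∀ a ∈ S, ∀ b ∈ S, a + ε ≠ b := by
    intro a ha b hb hab
    rcases lt_trichotomy a b with h' | h' | h'
    · have := hgap_le a ha b hb h'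
      linarith
    · subst h'; linarith
    · linarith
  -- the new box: a slightly shrunk copy of `F v`
  have hBx : (F v).x1 + ε < (F v).x2 - ε := by
    have := hgap_le _ (hmemS v).1 _ (hmemS v).2.1 (F v).hx
    rw [hε]; rw [hε] at *
    linarith
  have hBy : (F v).y1 + ε < (F v).y2 - ε := by
    have := hgap_le _ (hmemS v).2.2.1 _ (hmemS v).2.2.2 (F v).hy
    rw [hε]; rw [hε] at *
    linarith
  set B : Box := ⟨(F v).x1 + ε, (F v).x2 - ε, (F v).y1 + ε, (F v).y2 - ε, hBx, hBy⟩
    with hB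
  have eB1 : B.x1 = (F v).x1 + ε := rfl
  have eB2 : B.x2 = (F v).x2 - ε := rfl
  have eB3 : B.y1 = (F v).y1 + ε := rfl
  have eB4 : B.y2 = (F v).y2 - ε := rfl
  -- shorthand for coordinate membership
  have sx1 : ∀ u : V, (F u).x1 ∈ S := fun u => (hmemS u).1
  have sx2 : ∀ u : V, (F u).x2 ∈ S := fun u => (hmemS u).2.1
  have sy1 : ∀ u : V, (F u).y1 ∈ S := fun u => (hmemS u).2.2.1
  have sy2 : ∀ u : V, (F u).y2 ∈ S := fun u => (hmemS u).2.2.2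
  -- the region of B sits strictly inside the region of F v
  have hregB : ∀ p : ℝ × ℝ, p ∈ B.region →
      (F v).x1 < p.1 ∧ p.1 < (F v).x2 ∧ (F v).y1 < p.2 ∧ p.2 < (F v).y2 := by
    intro p hp
    rw [region_def] at hp
    obtain ⟨q1, q2, q3, q4⟩ := hp
    refine ⟨by linarith, by linarith, by linarith, by linarith⟩
  -- the frames of B and of F v are disjoint
  have hdisjBv : B.frame ∩ (F v).frame = ∅ := by
    rw [Set.eq_empty_iff_forall_notMem]
    rintro p ⟨hp1, hp2⟩
    obtain ⟨q1, q2, q3, q4⟩ := hregB p ((frame_def B p).1 hp1).1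
    rcases ((frame_def _ p).1 hp2).2 with e | e | e | e <;> linarith
  -- crossing through `F u` is preserved when passing from `F v` to `B`
  have hCrossB1 : ∀ u : V, u ≠ v → (Cross (F v) (F u) ↔ Cross B (F u)) := by
    intro u hu
    constructor
    · rintro ⟨c1, c2, c3, c4⟩
      have h1 := G1 _ (sx1 u) _ (sx2 v) c1
      have h2 := G1 _ (sy1 v) _ (sy1 u) c3
      have h3 := G1 _ (sy2 u) _ (sy2 v) c4
      exact ⟨by linarith, by linarith, by linarith, by linarith⟩
    · rintro ⟨c1, c2, c3, c4⟩
      refine ⟨by linarith, ?_, by linarith, by linarith⟩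
      have hle : (F v).x2 ≤ (F u).x2 := G2 _ (sx2 v) _ (sx2 u) (by linarith)
      rcases lt_or_eq_of_le hle with h' | h'
      · exact h'
      · exfalso
        refine not_mem_empty_inter (hF.corner_free u v hu)
          (p := ((F u).x2, (F u).y2)) ?_ ?_
        · rw [corners_def]; right; right; right; rfl
        · have := (F u).hy
          refine ⟨⟨by linarith [(F v).hx], by linarith, by linarith, by linarith⟩,
            Or.inr (Or.inl h'.symm)⟩
  have hCrossB2 : ∀ u : V, u ≠ v → (Cross (F u) (F v) ↔ Cross (F u) B) := by
    intro u hu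
    constructor
    · rintro ⟨c1, c2, c3, c4⟩
      have h1 := G1 _ (sx1 v) _ (sx2 u) c1
      have h2 := G1 _ (sx2 u) _ (sx2 v) c2
      exact ⟨by linarith, by linarith, by linarith, by linarith⟩
    · rintro ⟨c1, c2, c3, c4⟩
      refine ⟨by linarith, by linarith, ?_, ?_⟩
      · have hle : (F u).y1 ≤ (F v).y1 := G2 _ (sy1 u) _ (sy1 v) (by linarith)
        rcases lt_or_eq_of_le hle with h' | h'
        · exact h'
        · exfalso
          refine not_mem_empty_inter (hF.corner_free u v hu)
            (p := ((F u).x2, (F u).y1)) ?_ ?_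
          · rw [corners_def]; right; right; left; rfl
          · exact ⟨⟨by linarith, by linarith, by linarith [h'.le],
              by linarith [(F v).hy, h'.le]⟩, Or.inr (Or.inr (Or.inl h'))⟩
      · have hle : (F v).y2 ≤ (F u).y2 := G2 _ (sy2 v) _ (sy2 u) (by linarith)
        rcases lt_or_eq_of_le hle with h' | h'
        · exact h'
        · exfalso
          refine not_mem_empty_inter (hF.corner_free u v hu)
            (p := ((F u).x2, (F u).y2)) ?_ ?_
          · rw [corners_def]; right; right; right; rfl
          · exact ⟨⟨by linarith, by linarith, by linarith [(F v).hy, h'],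
              by linarith [h']⟩, Or.inr (Or.inr (Or.inr h'.symm))⟩
  -- region of B is inside region of F v
  have hBregv : B.region ⊆ (F v).region := by
    intro p hp
    obtain ⟨q1, q2, q3, q4⟩ := hregB p hp
    exact ⟨q1.le, q2.le, q3.le, q4.le⟩
  -- left side of B meets no old frame
  have hLeftB : ∀ u : V, u ≠ v → B.leftSide ∩ (F u).frame = ∅ := by
    intro u hu
    rw [Set.eq_empty_iff_forall_notMem]
    rintro p ⟨⟨e, r3, r4⟩, hpu⟩
    obtain ⟨⟨s1, s2, s3, s4⟩, du⟩ := (frame_def _ p).1 hpu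
    rcases du with f | f | f
    · exact Gne _ (sx1 v) _ (sx1 u) (by linarith)
    · exact Gne _ (sx1 v) _ (sx2 u) (by linarith)
    · refine not_mem_empty_inter (hF.left_free v u (Ne.symm hu))
        (p := ((F v).x1, p.2)) ⟨rfl, by linarith, by linarith⟩
        ⟨⟨?_, by linarith [hε_pos], s3, s4⟩, Or.inr (Or.inr f)⟩
      exact G2 _ (sx1 u) _ (sx1 v) (by linarith)
  -- left side of an old frame meets neither B
  have hLeftFu : ∀ u : V, u ≠ v → (F u).leftSide ∩ B.frame = ∅ := by
    intro u hu
    rw [Set.eq_empty_iff_forall_notMem]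
    rintro p ⟨⟨e, s3, s4⟩, hpB⟩
    obtain ⟨⟨r1, r2, r3, r4⟩, dB⟩ := (frame_def _ p).1 hpB
    rcases dB with f | f | f | f
    · exact Gne _ (sx1 v) _ (sx1 u) (by linarith)
    · exact Gne _ (sx1 u) _ (sx2 v) (by linarith)
    · refine not_mem_empty_inter (hF.left_free u v hu)
        (p := ((F u).x1, (F v).y1))
        ⟨rfl, G2 _ (sy1 u) _ (sy1 v) (by linarith), by linarith⟩
        ⟨⟨by linarith, by linarith, le_rfl, (F v).hy.le⟩,
          Or.inr (Or.inr (Or.inl rfl))⟩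
    · refine not_mem_empty_inter (hF.left_free u v hu)
        (p := ((F u).x1, (F v).y2))
        ⟨rfl, by linarith, G2 _ (sy2 v) _ (sy2 u) (by linarith)⟩
        ⟨⟨by linarith, by linarith, (F v).hy.le, le_rfl⟩,
          Or.inr (Or.inr (Or.inr rfl))⟩
  -- if the right side of B meets an old frame, B crosses the old frame
  have hRightB : ∀ u : V, u ≠ v → (B.rightSide ∩ (F u).frame).Nonempty →
      Cross B (F u) := by
    rintro u hu ⟨p, ⟨e, r3, r4⟩, hpu⟩
    obtain ⟨⟨s1, s2, s3, s4⟩, du⟩ := (frame_def _ p).1 hpu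
    rcases du with f | f | f
    · exact (Gne _ (sx1 u) _ (sx2 v) (by linarith)).elim
    · exact (Gne _ (sx2 u) _ (sx2 v) (by linarith)).elim
    · refine (hCrossB1 u hu).1 (crossOfRight hF (Ne.symm hu)
        ⟨((F v).x2, p.2), ⟨rfl, by linarith, by linarith⟩,
          ⟨⟨by linarith, ?_, s3, s4⟩, Or.inr (Or.inr f)⟩⟩)
      exact G2 _ (sx2 v) _ (sx2 u) (by linarith)
  -- if the right side of an old frame meets B, the old frame crosses B
  have hRightFu : ∀ u : V, u ≠ v → ((F u).rightSide ∩ B.frame).Nonempty →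
      Cross (F u) B := by
    rintro u hu ⟨p, ⟨e, s3, s4⟩, hpB⟩
    obtain ⟨⟨r1, r2, r3, r4⟩, dB⟩ := (frame_def _ p).1 hpB
    rcases dB with f | f | f | f
    · exact (Gne _ (sx1 v) _ (sx2 u) (by linarith)).elim
    · exact (Gne _ (sx2 u) _ (sx2 v) (by linarith)).elim
    · refine (hCrossB2 u hu).1 (crossOfRight hF hu
        ⟨((F u).x2, (F v).y1),
          ⟨rfl, G2 _ (sy1 u) _ (sy1 v) (by linarith), by linarith⟩,
          ⟨⟨by linarith, by linarith, le_rfl, (F v).hy.le⟩,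
            Or.inr (Or.inr (Or.inl rfl))⟩⟩)
    · refine (hCrossB2 u hu).1 (crossOfRight hF hu
        ⟨((F u).x2, (F v).y2),
          ⟨rfl, by linarith, G2 _ (sy2 v) _ (sy2 u) (by linarith)⟩,
          ⟨⟨by linarith, by linarith, (F v).hy.le, le_rfl⟩,
            Or.inr (Or.inr (Or.inr rfl))⟩⟩)
  -- classification of intersections with B
  have hC4 : ∀ u : V, u ≠ v → (B.frame ∩ (F u).frame).Nonempty →
      Cross B (F u) ∨ Cross (F u) B := by
    rintro u hu ⟨p, hpB, hpu⟩
    obtain ⟨⟨r1, r2, r3, r4⟩, dB⟩ := (frame_def _ p).1 hpB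
    obtain ⟨⟨s1, s2, s3, s4⟩, du⟩ := (frame_def _ p).1 hpu
    rcases dB with e | e | e | e
    · exact absurd (not_mem_empty_inter (hLeftB u hu) ⟨e, r3, r4⟩ hpu) id
    · exact Or.inl (hRightB u hu ⟨p, ⟨e, r3, r4⟩, hpu⟩)
    · rcases du with f | f | f | f
      · exact absurd (not_mem_empty_inter (hLeftFu u hu) ⟨f, s3, s4⟩ hpB) id
      · exact Or.inr (hRightFu u hu ⟨p, ⟨f, s3, s4⟩, hpB⟩)
      · exact (Gne _ (sy1 v) _ (sy1 u) (by linarith)).elim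
      · exact (Gne _ (sy1 v) _ (sy2 u) (by linarith)).elim
    · rcases du with f | f | f | f
      · exact absurd (not_mem_empty_inter (hLeftFu u hu) ⟨f, s3, s4⟩ hpB) id
      · exact Or.inr (hRightFu u hu ⟨p, ⟨f, s3, s4⟩, hpB⟩)
      · exact (Gne _ (sy1 u) _ (sy2 v) (by linarith)).elim
      · exact (Gne _ (sy2 u) _ (sy2 v) (by linarith)).elim
  -- intersection with B is equivalent to intersection with F v
  have hBiff : ∀ u : V, u ≠ v →
      ((B.frame ∩ (F u).frame).Nonempty ↔ ((F v).frame ∩ (F u).frame).Nonempty) := by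
    intro u hu
    constructor
    · intro hI
      rcases hC4 u hu hI with hc | hc
      · exact cross_inter ((hCrossB1 u hu).2 hc)
      · obtain ⟨p, h1, h2⟩ := cross_inter ((hCrossB2 u hu).2 hc)
        exact ⟨p, h2, h1⟩
    · intro hI
      rcases classify hF (Ne.symm hu) hI with hc | hc
      · exact cross_inter ((hCrossB1 u hu).1 hc)
      · obtain ⟨p, h1, h2⟩ := cross_inter ((hCrossB2 u hu).1 hc)
        exact ⟨p, h2, h1⟩
  have hcornFv : ((F v).x1, (F v).y1) ∈ (F v).frame :=
    ⟨⟨le_rfl, (F v).hx.le, le_rfl, (F v).hy.le⟩, Or.inl rfl⟩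
  -- lifting containment of B to containment of F v
  have hlift : ∀ z : V, B.frame ⊆ (F z).region → (F v).frame ⊆ (F z).region := by
    intro z hz
    have h1 := hz (show ((B.x1, B.y1) : ℝ × ℝ) ∈ B.frame from
      ⟨⟨le_rfl, B.hx.le, le_rfl, B.hy.le⟩, Or.inl rfl⟩)
    have h2 := hz (show ((B.x2, B.y2) : ℝ × ℝ) ∈ B.frame from
      ⟨⟨B.hx.le, le_rfl, B.hy.le, le_rfl⟩, Or.inr (Or.inl rfl)⟩)
    rw [region_def] at h1 h2
    simp only at h1 h2
    have k1 : (F z).x1 ≤ (F v).x1 := G2 _ (sx1 z) _ (sx1 v) (by linarith [h1.1])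
    have k2 : (F v).x2 ≤ (F z).x2 := G2 _ (sx2 v) _ (sx2 z) (by linarith [h2.2.1])
    have k3 : (F z).y1 ≤ (F v).y1 := G2 _ (sy1 z) _ (sy1 v) (by linarith [h1.2.2.1])
    have k4 : (F v).y2 ≤ (F z).y2 := G2 _ (sy2 v) _ (sy2 z) (by linarith [h2.2.2.2])
    rintro p ⟨⟨m1, m2, m3, m4⟩, -⟩
    exact ⟨by linarith, by linarith, by linarith, by linarith⟩
  -- the new representation
  refine ⟨Sum.elim F (fun _ => B), ?_, ?_, ?_, ?_, ?_⟩
  · -- adjacency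
    rintro (u | t) (w | t') hne
    · have huw : u ≠ w := fun hh => hne (by rw [hh])
      rw [addTwin, SimpleGraph.fromRel_adj]
      constructor
      · rintro ⟨-, h1 | h1⟩
        · exact (hF.adj_iff u w huw).1 h1
        · exact (hF.adj_iff u w huw).1 (G.adj_symm h1)
      · intro hI
        exact ⟨hne, Or.inl ((hF.adj_iff u w huw).2 hI)⟩
    · -- u vs the twin
      rw [addTwin, SimpleGraph.fromRel_adj]
      by_cases huv : u = v
      · subst huv
        constructor
        · rintro ⟨-, h1 | h1⟩
          · exact h1.elim
          · exact (G.irrefl h1).elim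
        · rintro ⟨p, h1, h2⟩
          exact (not_mem_empty_inter hdisjBv h2 h1).elim
      · constructor
        · rintro ⟨-, h1 | h1⟩
          · exact h1.elim
          · obtain ⟨p, k1, k2⟩ := (hBiff u huv).2 ((hF.adj_iff v u (Ne.symm huv)).1 h1)
            exact ⟨p, k2, k1⟩
        · rintro ⟨p, h1, h2⟩
          refine ⟨hne, Or.inr ((hF.adj_iff v u (Ne.symm huv)).2
            ((hBiff u huv).1 ⟨p, h2, h1⟩))⟩
    · -- twin vs u
      rw [addTwin, SimpleGraph.fromRel_adj]
      by_cases huv : w = v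
      · subst huv
        constructor
        · rintro ⟨-, h1 | h1⟩
          · exact (G.irrefl h1).elim
          · exact h1.elim
        · rintro ⟨p, h1, h2⟩
          exact (not_mem_empty_inter hdisjBv h1 h2).elim
      · constructor
        · rintro ⟨-, h1 | h1⟩
          · exact (hBiff w huv).2 ((hF.adj_iff v w (Ne.symm huv)).1 h1)
          · exact h1.elim
        · rintro ⟨p, h1, h2⟩
          exact ⟨hne, Or.inl ((hF.adj_iff v w (Ne.symm huv)).2
            ((hBiff w huv).1 ⟨p, h1, h2⟩))⟩
    · cases t; cases t'; exact absurd rfl hne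
  · -- corner-freeness
    have hnotB : ∀ c1 c2 : ℝ, c1 ∈ S → c2 ∈ S → ((c1, c2) : ℝ × ℝ) ∈ B.frame → False := by
      intro c1 c2 h1 h2 hf
      rcases hf.2 with e | e | e | e <;> simp only at e
      · exact Gne _ (sx1 v) _ h1 (by linarith)
      · exact Gne _ h1 _ (sx2 v) (by linarith)
      · exact Gne _ (sy1 v) _ h2 (by linarith)
      · exact Gne _ h2 _ (sy2 v) (by linarith)
    have hnotFu : ∀ (u : V) (c1 c2 : ℝ), (c1 = B.x1 ∨ c1 = B.x2) →
        (c2 = B.y1 ∨ c2 = B.y2) → ((c1, c2) : ℝ × ℝ) ∈ (F u).frame → False := by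
      intro u c1 c2 h1 h2 hf
      rcases hf.2 with e | e | e | e <;> simp only at e
      · rcases h1 with h1 | h1
        · exact Gne _ (sx1 v) _ (sx1 u) (by linarith)
        · exact Gne _ (sx1 u) _ (sx2 v) (by linarith)
      · rcases h1 with h1 | h1
        · exact Gne _ (sx1 v) _ (sx2 u) (by linarith)
        · exact Gne _ (sx2 u) _ (sx2 v) (by linarith)
      · rcases h2 with h2 | h2
        · exact Gne _ (sy1 v) _ (sy1 u) (by linarith)
        · exact Gne _ (sy1 u) _ (sy2 v) (by linarith)
      · rcases h2 with h2 | h2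
        · exact Gne _ (sy1 v) _ (sy2 u) (by linarith)
        · exact Gne _ (sy2 u) _ (sy2 v) (by linarith)
    rintro (u | t) (w | t') hne
    · exact hF.corner_free u w (fun hh => hne (by rw [hh]))
    · rw [Set.eq_empty_iff_forall_notMem]
      rintro p ⟨hc, hf⟩
      rw [corners_def] at hc
      rcases hc with rfl | rfl | rfl | rfl
      · exact hnotB _ _ (sx1 u) (sy1 u) hf
      · exact hnotB _ _ (sx1 u) (sy2 u) hf
      · exact hnotB _ _ (sx2 u) (sy1 u) hf
      · exact hnotB _ _ (sx2 u) (sy2 u) hf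
    · rw [Set.eq_empty_iff_forall_notMem]
      rintro p ⟨hc, hf⟩
      rw [corners_def] at hc
      rcases hc with rfl | rfl | rfl | rfl
      · exact hnotFu w B.x1 B.y1 (Or.inl rfl) (Or.inl rfl) hf
      · exact hnotFu w B.x1 B.y2 (Or.inl rfl) (Or.inr rfl) hf
      · exact hnotFu w B.x2 B.y1 (Or.inr rfl) (Or.inl rfl) hf
      · exact hnotFu w B.x2 B.y2 (Or.inr rfl) (Or.inr rfl) hf
    · cases t; cases t'; exact absurd rfl hne
  · -- left-freeness
    rintro (u | t) (w | t') hne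
    · exact hF.left_free u w (fun hh => hne (by rw [hh]))
    · by_cases huv : u = v
      · subst huv
        rw [Set.eq_empty_iff_forall_notMem]
        rintro p ⟨h1, h2⟩
        exact not_mem_empty_inter hdisjBv h2 (left_subset_frame _ h1)
      · exact hLeftFu u huv
    · by_cases huv : w = v
      · subst huv
        rw [Set.eq_empty_iff_forall_notMem]
        rintro p ⟨h1, h2⟩
        exact not_mem_empty_inter hdisjBv (left_subset_frame _ h1) h2
      · exact hLeftB w huv
    · cases t; cases t'; exact absurd rfl hne
  · -- right-crossing
    rintro (u | t) (w | t') hne hI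
    · exact hF.right_cross u w (fun hh => hne (by rw [hh])) hI
    · by_cases huv : u = v
      · subst huv
        obtain ⟨p, h1, h2⟩ := hI
        exact (not_mem_empty_inter hdisjBv h2 (right_subset_frame _ h1)).elim
      · exact cross_top_bot (hRightFu u huv hI)
    · by_cases huv : w = v
      · subst huv
        obtain ⟨p, h1, h2⟩ := hI
        exact (not_mem_empty_inter hdisjBv (right_subset_frame _ h1) h2).elim
      · exact cross_top_bot (hRightB w huv hI)
    · cases t; cases t'; exact absurd rfl hne
  · -- no nesting
    rintro (u | t) (w | t') (x | t'') hab hca hcb hI hsub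
    · exact hF.not_nested u w x (fun hh => hab (by rw [hh]))
        (fun hh => hca (by rw [hh])) (fun hh => hcb (by rw [hh])) hI hsub
    · -- third frame is B
      have huw : u ≠ w := fun hh => hab (by rw [hh])
      have hsubu : (F v).frame ⊆ (F u).region := hlift u (fun p hp => (hsub hp).1)
      have hsubw : (F v).frame ⊆ (F w).region := hlift w (fun p hp => (hsub hp).2)
      by_cases hvu : v = u
      · subst hvu
        exact not_sub_of_inter hF huw hI hsubw
      · by_cases hvw : v = w
        · subst hvw
          obtain ⟨p, h1, h2⟩ := hI
          exact not_sub_of_inter hF (fun hh => huw hh.symm) ⟨p, h2, h1⟩ hsubu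
        · exact hF.not_nested u w v huw hvu hvw hI (fun p hp => ⟨hsubu hp, hsubw hp⟩)
    · -- second frame is B
      have huv : u ≠ v := by
        rintro rfl
        obtain ⟨p, h1, h2⟩ := hI
        exact not_mem_empty_inter hdisjBv h2 h1
      have hIvu : ((F v).frame ∩ (F u).frame).Nonempty := by
        apply (hBiff u huv).1
        obtain ⟨p, h1, h2⟩ := hI
        exact ⟨p, h2, h1⟩
      by_cases hxv : x = v
      · have hcx : ((F x).x1, (F x).y1) ∈ (F x).frame :=
          ⟨⟨le_rfl, (F x).hx.le, le_rfl, (F x).hy.le⟩, Or.inl rfl⟩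
        have h9 : ((F x).x1, (F x).y1) ∈ B.region := (hsub hcx).2
        rw [region_def] at h9
        simp only at h9
        rw [hxv] at h9
        linarith [h9.1]
      · exact hF.not_nested v u x (Ne.symm huv) hxv
          (fun hh => hca (by rw [hh]))
          hIvu (fun p hp => ⟨hBregv (hsub hp).2, (hsub hp).1⟩)
    · cases t'; cases t''; exact absurd rfl hcb
    · -- first frame is B
      have hwv : w ≠ v := by
        rintro rfl
        obtain ⟨p, h1, h2⟩ := hI
        exact not_mem_empty_inter hdisjBv h1 h2
      have hIvw : ((F v).frame ∩ (F w).frame).Nonempty := (hBiff w hwv).1 hI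
      by_cases hxv : x = v
      · have hcx : ((F x).x1, (F x).y1) ∈ (F x).frame :=
          ⟨⟨le_rfl, (F x).hx.le, le_rfl, (F x).hy.le⟩, Or.inl rfl⟩
        have h9 : ((F x).x1, (F x).y1) ∈ B.region := (hsub hcx).1
        rw [region_def] at h9
        simp only at h9
        rw [hxv] at h9
        linarith [h9.1]
      · exact hF.not_nested v w x (Ne.symm hwv) hxv
          (fun hh => hcb (by rw [hh]))
          hIvw (fun p hp => ⟨hBregv (hsub hp).1, (hsub hp).2⟩)
    · cases t; cases t''; exact absurd rfl hca
    · cases t; cases t'; exact absurd rfl hab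
    · cases t; cases t'; exact absurd rfl hab
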